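/- Let d ≥ 1 and n ≥ 1, let M be a ZMod d-submodule of the discrete phase space V, and let I be a subset of Fin n. Then Submodule.map π_I (M^ω) = V_I ⊓ ((M ⊓ V_I)^ω); in other words, the image under the coordinate projection π_I of the symplectic complement of M equals the symplectic complement, computed inside the subspace V_I, of M ∩ V_I. -/

import Mathlib

open scoped BigOperators
open ComplexOrder

/-- The discrete phase space for `n` particles with local dimension `d`. -/
abbrev PhaseSpace (d n : ℕ) : Type := (Fin n → ZMod d) × (Fin n → ZMod d)

/-- The symplectic form on the discrete phase space. -/
def symp {d n : ℕ} (v w : PhaseSpace d n) : ZMod d :=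
  ∑ i, (v.1 i * w.2 i - v.2 i * w.1 i)

lemma symp_add_left {d n : ℕ} (a b w : PhaseSpace d n) :
    symp (a + b) w = symp a w + symp b w := by
  simp only [symp, Prod.fst_add, Prod.snd_add, Pi.add_apply, ← Finset.sum_add_distrib]
  exact Finset.sum_congr rfl fun i _ => by ring

lemma symp_smul_left {d n : ℕ} (c : ZMod d) (a w : PhaseSpace d n) :
    symp (c • a) w = c * symp a w := by
  simp only [symp, Prod.smul_fst, Prod.smul_snd, Pi.smul_apply, smul_eq_mul, Finset.mul_sum]
  exact Finset.sum_congr rfl fun i _ => by ring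

/-- The symplectic complement `M^ω` of a submodule of phase space. -/
def sympCompl {d n : ℕ} (M : Submodule (ZMod d) (PhaseSpace d n)) :
    Submodule (ZMod d) (PhaseSpace d n) where
  carrier := {v | ∀ m ∈ M, symp v m = 0}
  zero_mem' := by
    intro m _
    simp [symp]
  add_mem' := by
    intro a b ha hb m hm
    rw [Set.mem_setOf_eq] at ha hb
    show symp _ m = 0
    rw [symp_add_left, ha m hm, hb m hm, add_zero]
  smul_mem' := by
    intro c a ha m hm
    rw [Set.mem_setOf_eq] at ha
    show symp _ m = 0
    rw [symp_smul_left, ha m hm, mul_zero]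

/-- The submodule `V_I` of phase-space vectors supported on the coordinates in `I`. -/
def coordSub (d n : ℕ) (I : Set (Fin n)) : Submodule (ZMod d) (PhaseSpace d n) where
  carrier := {v | ∀ i ∉ I, v.1 i = 0 ∧ v.2 i = 0}
  zero_mem' := by
    intro i _
    simp
  add_mem' := by
    intro a b ha hb i hi
    obtain ⟨ha1, ha2⟩ := ha i hi
    obtain ⟨hb1, hb2⟩ := hb i hi
    constructor
    · simp [Prod.fst_add, Pi.add_apply, ha1, hb1]
    · simp [Prod.snd_add, Pi.add_apply, ha2, hb2]
  smul_mem' := by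
    intro c a ha i hi
    obtain ⟨h1, h2⟩ := ha i hi
    constructor
    · simp [Prod.smul_fst, Pi.smul_apply, h1]
    · simp [Prod.smul_snd, Pi.smul_apply, h2]

open Classical in
/-- The coordinate projection `π_I` of phase space onto the coordinates in `I`. -/
noncomputable def proj (d n : ℕ) (I : Set (Fin n)) :
    PhaseSpace d n →ₗ[ZMod d] PhaseSpace d n where
  toFun v := (fun i => if i ∈ I then v.1 i else 0, fun i => if i ∈ I then v.2 i else 0)
  map_add' := by
    intro a b
    refine Prod.ext ?_ ?_ <;> funext i <;> by_cases h : i ∈ I <;>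
      simp [h, Prod.fst_add, Prod.snd_add]
  map_smul' := by
    intro c a
    refine Prod.ext ?_ ?_ <;> funext i <;> by_cases h : i ∈ I <;>
      simp [h, Prod.smul_fst, Prod.smul_snd]


-- divisibility lemma

lemma zmod_div_lemma {d : ℕ} (hd : d ≠ 0) (a b : ZMod d)
    (H : ∀ c : ZMod d, c * a = 0 → c * b = 0) : ∃ x, a * x = b := by
  haveI : NeZero d := ⟨hd⟩
  set A : ℤ := (a.val : ℤ) with hA
  set B : ℤ := (b.val : ℤ) with hB
  set D : ℤ := (d : ℤ) with hD
  have hDne : D ≠ 0 := by rw [hD]; exact_mod_cast hd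
  set g : ℤ := (Int.gcd A D : ℤ) with hg
  have hgne : g ≠ 0 := by
    simp only [hg]
    exact_mod_cast fun h => hDne (Int.gcd_eq_zero_iff.mp (by exact_mod_cast h)).2
  obtain ⟨A', hA'⟩ : g ∣ A := Int.gcd_dvd_left A D
  obtain ⟨D', hD'⟩ : g ∣ D := Int.gcd_dvd_right A D
  have hD'ne : D' ≠ 0 := fun h => hDne (by rw [hD', h, mul_zero])
  have ha : ((A : ZMod d)) = a := by
    rw [hA]; push_cast; exact ZMod.natCast_rightInverse a
  have hb : ((B : ZMod d)) = b := by
    rw [hB]; push_cast; exact ZMod.natCast_rightInverse b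
  have h1 : ((D' : ZMod d)) * a = 0 := by
    rw [← ha, ← Int.cast_mul, ZMod.intCast_zmod_eq_zero_iff_dvd]
    exact ⟨A', by rw [show (d:ℤ) = D from hD.symm, hD', hA']; ring⟩
  have h2 := H _ h1
  rw [← hb, ← Int.cast_mul, ZMod.intCast_zmod_eq_zero_iff_dvd] at h2
  obtain ⟨k, hk⟩ := h2
  have hBk : B = g * k := by
    apply mul_left_cancel₀ hD'ne
    rw [show D' * B = D * k from by rw [hk], hD']; ring
  have hgab := Int.gcd_eq_gcd_ab A D
  refine ⟨((Int.gcdA A D * k : ℤ) : ZMod d), ?_⟩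
  rw [← hb, ← ha, ← Int.cast_mul, hBk]
  have : g * k = A * (Int.gcdA A D * k) + D * (Int.gcdB A D * k) := by
    rw [hg, hgab]; ring
  rw [this]
  push_cast
  rw [hD]
  simp [ZMod.natCast_self]

lemma zmod_baer {d : ℕ} (hd : d ≠ 0) : Module.Baer (ZMod d) (ZMod d) := by
  haveI : IsPrincipalIdealRing (ZMod d) :=
    IsPrincipalIdealRing.of_surjective (Int.castRingHom (ZMod d)) ZMod.intCast_surjective
  intro I g
  obtain ⟨a, rfl⟩ := (IsPrincipalIdealRing.principal I).principal
  have hamem : a ∈ Ideal.span {a} := Ideal.subset_span rfl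
  set b : ZMod d := g ⟨a, hamem⟩ with hbdef
  have H : ∀ c : ZMod d, c * a = 0 → c * b = 0 := by
    intro c hc
    have : c • (⟨a, hamem⟩ : Ideal.span {a}) = 0 := by
      ext; simpa [smul_eq_mul] using hc
    calc c * b = g (c • ⟨a, hamem⟩) := by rw [map_smul]; simp [hbdef, smul_eq_mul]
    _ = 0 := by rw [this, map_zero]
  obtain ⟨x, hx⟩ := zmod_div_lemma hd a b H
  refine ⟨LinearMap.toSpanSingleton (ZMod d) (ZMod d) x, fun y hy => ?_⟩
  obtain ⟨r, hr⟩ := Ideal.mem_span_singleton'.mp hy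
  have hy' : (⟨y, hy⟩ : Ideal.span {a}) = r • ⟨a, hamem⟩ := by
    ext; simp [smul_eq_mul, hr]
  rw [hy', map_smul, ← hbdef]
  simp only [LinearMap.toSpanSingleton_apply, smul_eq_mul]
  rw [← hr, ← hx]; ring

lemma symp_add_right {d n : ℕ} (w a b : PhaseSpace d n) :
    symp w (a + b) = symp w a + symp w b := by
  simp only [symp, Prod.fst_add, Prod.snd_add, Pi.add_apply, ← Finset.sum_add_distrib]
  exact Finset.sum_congr rfl fun i _ => by ring

lemma symp_smul_right {d n : ℕ} (c : ZMod d) (w a : PhaseSpace d n) :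
    symp w (c • a) = c * symp w a := by
  simp only [symp, Prod.smul_fst, Prod.smul_snd, Pi.smul_apply, smul_eq_mul, Finset.mul_sum]
  exact Finset.sum_congr rfl fun i _ => by ring

/-- `symp w ·` as a linear map. -/
def sympRight {d n : ℕ} (w : PhaseSpace d n) : PhaseSpace d n →ₗ[ZMod d] ZMod d where
  toFun v := symp w v
  map_add' := symp_add_right w
  map_smul' := fun c a => symp_smul_right c w a

open Classical in
lemma proj_apply {d n : ℕ} (I : Set (Fin n)) (v : PhaseSpace d n) :
    proj d n I v =
      (fun i => if i ∈ I then v.1 i else 0, fun i => if i ∈ I then v.2 i else 0) := rfl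

lemma symp_proj {d n : ℕ} (I : Set (Fin n)) (u m : PhaseSpace d n) :
    symp (proj d n I u) m = symp u (proj d n I m) := by
  classical
  simp only [symp, proj_apply]
  refine Finset.sum_congr rfl fun i _ => ?_
  by_cases h : i ∈ I <;> simp [h]

lemma proj_eq_self {d n : ℕ} {I : Set (Fin n)} {v : PhaseSpace d n}
    (hv : v ∈ coordSub d n I) : proj d n I v = v := by
  classical
  refine Prod.ext ?_ ?_ <;> funext i <;> simp only [proj_apply] <;>
    by_cases h : i ∈ I
  · simp [h]
  · simp [h, (hv i h).1]
  · simp [h]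
  · simp [h, (hv i h).2]

lemma proj_mem_coordSub {d n : ℕ} (I : Set (Fin n)) (v : PhaseSpace d n) :
    proj d n I v ∈ coordSub d n I := by
  classical
  intro i hi
  simp [proj_apply, hi]

lemma mem_coordSub_of_proj_compl_eq_zero {d n : ℕ} {I : Set (Fin n)} {v : PhaseSpace d n}
    (hv : proj d n Iᶜ v = 0) : v ∈ coordSub d n I := by
  classical
  intro i hi
  have h1 := congrFun (congrArg Prod.fst hv) i
  have h2 := congrFun (congrArg Prod.snd hv) i
  simp only [proj_apply, Set.mem_compl_iff, hi, if_pos, Prod.fst_zero, Prod.snd_zero,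
    Pi.zero_apply] at h1 h2
  exact ⟨by simpa [hi] using h1, by simpa [hi] using h2⟩

lemma proj_proj_compl {d n : ℕ} (I : Set (Fin n)) (v : PhaseSpace d n) :
    proj d n I (proj d n Iᶜ v) = 0 := by
  classical
  refine Prod.ext ?_ ?_ <;> funext i <;> simp only [proj_apply] <;>
    by_cases h : i ∈ I <;> simp [h]

lemma symp_repr {d n : ℕ} (G : PhaseSpace d n →ₗ[ZMod d] ZMod d) :
    ∃ u : PhaseSpace d n, ∀ x, symp u x = G x := by
  classical
  refine ⟨(fun i => G (0, Pi.single i 1), fun i => -G (Pi.single i 1, 0)), fun x => ?_⟩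
  have hx : x = ∑ i, (x.1 i • ((Pi.single i 1, 0) : PhaseSpace d n)
      + x.2 i • ((0, Pi.single i 1) : PhaseSpace d n)) := by
    refine Prod.ext ?_ ?_
    · rw [Prod.fst_sum]
      simp only [Prod.fst_add, Prod.smul_fst, smul_zero, add_zero]
      rw [show (∑ i, x.1 i • (Pi.single i 1 : Fin n → ZMod d))
          = ∑ i, Pi.single i (x.1 i) from Finset.sum_congr rfl fun i _ => by
            rw [← Pi.single_smul, smul_eq_mul, mul_one]]
      exact (Finset.univ_sum_single x.1).symm
    · rw [Prod.snd_sum]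
      simp only [Prod.snd_add, Prod.smul_snd, smul_zero, zero_add]
      rw [show (∑ i, x.2 i • (Pi.single i 1 : Fin n → ZMod d))
          = ∑ i, Pi.single i (x.2 i) from Finset.sum_congr rfl fun i _ => by
            rw [← Pi.single_smul, smul_eq_mul, mul_one]]
      exact (Finset.univ_sum_single x.2).symm
  conv_rhs => rw [hx]
  rw [map_sum]
  simp only [map_add, map_smul, smul_eq_mul]
  simp only [symp]
  refine Finset.sum_congr rfl fun i _ => by ring

theorem stmt3 (d n : ℕ) (hd : 1 ≤ d) (hn : 1 ≤ n)
    (M : Submodule (ZMod d) (PhaseSpace d n)) (I : Set (Fin n)) :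
    Submodule.map (proj d n I) (sympCompl M) =
      coordSub d n I ⊓ sympCompl (M ⊓ coordSub d n I) := by
  haveI : NeZero d := ⟨by omega⟩
  apply le_antisymm
  · rintro v ⟨x, hx, rfl⟩
    refine ⟨proj_mem_coordSub I x, ?_⟩
    rintro m ⟨hmM, hmI⟩
    show symp (proj d n I x) m = 0
    rw [symp_proj, proj_eq_self hmI]
    exact hx m hmM
  · rintro w ⟨hwI, hw⟩
    set ψ : ↥M →ₗ[ZMod d] PhaseSpace d n := (proj d n Iᶜ) ∘ₗ M.subtype with hψ
    set φ : ↥M →ₗ[ZMod d] ZMod d := -((sympRight w) ∘ₗ M.subtype) with hφ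
    have hker : LinearMap.ker ψ ≤ LinearMap.ker φ := by
      intro m hm
      rw [LinearMap.mem_ker] at hm ⊢
      have hmI : (m : PhaseSpace d n) ∈ coordSub d n I :=
        mem_coordSub_of_proj_compl_eq_zero hm
      have h0 : symp w (m : PhaseSpace d n) = 0 := hw _ ⟨m.2, hmI⟩
      simp [hφ, sympRight, h0]
    set K := LinearMap.ker ψ with hK
    have hf : Function.Injective (K.liftQ ψ le_rfl) :=
      LinearMap.ker_eq_bot.mp (Submodule.ker_liftQ_eq_bot K ψ le_rfl le_rfl)
    obtain ⟨G, hG⟩ := (zmod_baer (show d ≠ 0 by omega)).extension_property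
      (K.liftQ ψ le_rfl) hf (K.liftQ φ hker)
    have hGm : ∀ m : ↥M, G (proj d n Iᶜ (m : PhaseSpace d n)) = -symp w m := by
      intro m
      have h1 := LinearMap.congr_fun hG (K.mkQ m)
      simp only [LinearMap.comp_apply, Submodule.mkQ_apply, Submodule.liftQ_apply] at h1
      simpa [hψ, hφ, sympRight] using h1
    obtain ⟨u, hu⟩ := symp_repr G
    refine ⟨w + proj d n Iᶜ u, ?_, ?_⟩
    · intro m hm
      show symp (w + proj d n Iᶜ u) m = 0
      rw [symp_add_left, symp_proj, hu, hGm ⟨m, hm⟩, add_neg_cancel]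
    · rw [map_add, proj_eq_self hwI, proj_proj_compl, add_zero]
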